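/- Let G be a group acting on a uniform space X. The projection p: X → X/G has the chain lifting property (for every entourage E of X there is an entourage F of X such that any p(F)-chain in X/G starting from p(x₀) lifts to an E-chain in X starting from x₀) if and only if the action is neutral (for every entourage E of X there is an entourage F of X such that (x, h·y) ∈ F for some h ∈ G implies there exists g ∈ G with (g·x, y) ∈ E). -/

import Mathlib

open scoped Uniformity

/-- An `E`-chain: consecutive members of the list are `E`-related. -/
def ChainIn {α : Type*} (E : Set (α × α)) (c : List α) : Prop :=
  c.Chain' fun a b => (a, b) ∈ E

/-- The image `f(E)` of a relation under a map. -/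
def imgRel {α β : Type*} (f : α → β) (E : Set (α × α)) : Set (β × β) :=
  Prod.map f f '' E

/-- The orbit projection `p : X → X/G`. -/
def proj (G X : Type*) [Group G] [MulAction G X] :
    X → Quotient (MulAction.orbitRel G X) :=
  Quotient.mk (MulAction.orbitRel G X)

/-- `G_F`: the subgroup of `G` generated by `S_F = {h | (x, h • x) ∈ F for some x}`. -/
def GF (G : Type*) {X : Type*} [Group G] [MulAction G X] (F : Set (X × X)) : Subgroup G :=
  Subgroup.closure {h : G | ∃ x : X, (x, h • x) ∈ F}

/-- Chain lifting property for `f : X → Y`: for every (symmetric) entourage `E` of `X`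
there is an entourage `F` such that every `f(F)`-chain starting at `f x₀` lifts to an
`E`-chain starting at `x₀`. -/
def HasChainLifting {X Y : Type*} [UniformSpace X] (f : X → Y) : Prop :=
  ∀ E ∈ 𝓤 X, SetRel.IsSymm E → ∃ F ∈ 𝓤 X, SetRel.IsSymm F ∧
    ∀ (x₀ : X) (d : List Y), ChainIn (imgRel f F) d → d.head? = some (f x₀) →
      ∃ c : List X, ChainIn E c ∧ c.head? = some x₀ ∧ c.map f = d

/-- Uniqueness of chain lifts: there is an entourage `F` such that two `F`-chains with the
same origin and the same image are equal. -/
def HasUniqueChainLifts {X Y : Type*} [UniformSpace X] (f : X → Y) : Prop :=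
  ∃ F ∈ 𝓤 X, SetRel.IsSymm F ∧
    ∀ α β : List X, ChainIn F α → ChainIn F β →
      α.head? = β.head? → α.map f = β.map f → α = β

/-- Approximate uniqueness of chain lifts: for every entourage `E` there is an entourage `F`
such that two `F`-chains with the same origin and the same image are `E`-close. -/
def HasApproxUniqueChainLifts {X Y : Type*} [UniformSpace X] (f : X → Y) : Prop :=
  ∀ E ∈ 𝓤 X, SetRel.IsSymm E → ∃ F ∈ 𝓤 X, SetRel.IsSymm F ∧
    ∀ α β : List X, ChainIn F α → ChainIn F β →
      α.head? = β.head? → α.map f = β.map f →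
        List.Forall₂ (fun a b => (a, b) ∈ E) α β

/-- Neutral action. -/
def Neutral (G X : Type*) [Group G] [MulAction G X] [UniformSpace X] : Prop :=
  ∀ E ∈ 𝓤 X, SetRel.IsSymm E → ∃ F ∈ 𝓤 X, SetRel.IsSymm F ∧
    ∀ (x y : X) (h : G), (x, h • y) ∈ F → ∃ g : G, (g • x, y) ∈ E

/-- Uniformly properly discontinuous action. -/
def UnifProperlyDiscontinuous (G X : Type*) [Group G] [MulAction G X] [UniformSpace X] : Prop :=
  ∃ E ∈ 𝓤 X, SetRel.IsSymm E ∧ ∀ (x : X) (g : G), (x, g • x) ∈ E → g = 1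

/-- Equicontinuous action. -/
def EquicontinuousAction (G X : Type*) [Group G] [MulAction G X] [UniformSpace X] : Prop :=
  ∀ E ∈ 𝓤 X, ∃ F ∈ 𝓤 X, ∀ (g : G) (x y : X), (x, y) ∈ F → (g • x, g • y) ∈ E

/-- Small scale uniformly continuous action. -/
def SSUnifCont (G X : Type*) [Group G] [MulAction G X] [UniformSpace X] : Prop :=
  ∀ E ∈ 𝓤 X, SetRel.IsSymm E → ∃ F ∈ 𝓤 X, SetRel.IsSymm F ∧
    ∀ g ∈ GF G F, {q : X × X | (g • q.1, g • q.2) ∈ E} ∈ 𝓤 X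

/-- Small scale uniformly equicontinuous action. -/
def SSUnifEquicont (G X : Type*) [Group G] [MulAction G X] [UniformSpace X] : Prop :=
  ∀ E ∈ 𝓤 X, SetRel.IsSymm E → ∃ F ∈ 𝓤 X, SetRel.IsSymm F ∧
    ∀ g ∈ GF G F, ∀ x y : X, (x, y) ∈ F → (g • x, g • y) ∈ E

/-- Small scale bounded orbits: the orbits of `G_F` are `E`-bounded. -/
def SSBoundedOrbits (G X : Type*) [Group G] [MulAction G X] [UniformSpace X] : Prop :=
  ∀ E ∈ 𝓤 X, SetRel.IsSymm E → ∃ F ∈ 𝓤 X, SetRel.IsSymm F ∧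
    ∀ x : X, ∀ g ∈ GF G F, ∀ g' ∈ GF G F, (g • x, g' • x) ∈ E

/-- Chain connected uniform space. -/
def ChainConnectedU (X : Type*) [UniformSpace X] : Prop :=
  ∀ E ∈ 𝓤 X, SetRel.IsSymm E → ∀ x y : X,
    ∃ c : List X, ChainIn E c ∧ c.head? = some x ∧ c.getLast? = some y


lemma proj_eq_iff {G X : Type*} [Group G] [MulAction G X] {a b : X} :
    proj G X a = proj G X b ↔ ∃ g : G, g • b = a := by
  simp [proj, Quotient.eq, MulAction.orbitRel_apply, MulAction.mem_orbit_iff]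

lemma lift_aux {G X : Type*} [Group G] [MulAction G X] [UniformSpace X]
    {E F : Set (X × X)} (hEs : SetRel.IsSymm E) (hFs : SetRel.IsSymm F)
    (hN : ∀ (x y : X) (h : G), (x, h • y) ∈ F → ∃ g : G, (g • x, y) ∈ E) :
    ∀ (t : List (Quotient (MulAction.orbitRel G X))) (x : X),
      List.Chain (fun a b => (a, b) ∈ imgRel (proj G X) F) (proj G X x) t →
      ∃ c : List X, List.Chain (fun a b => (a, b) ∈ E) x c ∧ c.map (proj G X) = t := by
  intro t
  induction t with
  | nil => exact fun x _ => ⟨[], List.Chain.nil, rfl⟩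
  | cons b t' ih =>
    intro x hc
    rw [List.Chain, List.chain_cons] at hc
    obtain ⟨⟨⟨a₁, a₂⟩, hmem, heq⟩, hrest⟩ := hc
    simp only [Prod.map, Prod.mk.injEq] at heq
    obtain ⟨h, rfl⟩ := proj_eq_iff.mp heq.1
    have h2 : (a₂, h • x) ∈ F := hFs.symm _ _ hmem
    obtain ⟨g, hg⟩ := hN a₂ x h h2
    have hpb : proj G X (g • a₂) = b := by
      rw [← heq.2]; exact proj_eq_iff.mpr ⟨g, rfl⟩
    obtain ⟨c', hc', hm'⟩ := ih (g • a₂) (by rw [hpb]; exact hrest)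
    exact ⟨(g • a₂) :: c', List.Chain.cons (hEs.symm _ _ hg) hc', by simp [hpb, hm']⟩

/-- The projection `p : X → X/G` has the chain lifting property iff the action is neutral. -/
theorem stmt0 (G X : Type*) [Group G] [MulAction G X] [UniformSpace X] :
    HasChainLifting (proj G X) ↔ Neutral G X := by
  constructor
  · intro H E hE hEs
    obtain ⟨F, hF, hFs, hlift⟩ := H E hE hEs
    refine ⟨F, hF, hFs, fun x y h hxy => ?_⟩
    have hchain : ChainIn (imgRel (proj G X) F) [proj G X y, proj G X x] := by
      refine List.isChain_pair.mpr ⟨(h • y, x), hFs.symm _ _ hxy, ?_⟩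
      have hp : proj G X (h • y) = proj G X y := proj_eq_iff.mpr ⟨h, rfl⟩
      simp [Prod.map, hp]
    obtain ⟨c, hcE, hch, hcm⟩ := hlift y _ hchain rfl
    rcases c with _ | ⟨a, _ | ⟨b, _ | ⟨z, tl⟩⟩⟩
    · simp at hcm
    · simp at hcm
    · simp only [List.head?, Option.some.injEq] at hch
      subst hch
      simp only [List.map, List.cons.injEq] at hcm
      obtain ⟨g, rfl⟩ := proj_eq_iff.mp hcm.2.1
      exact ⟨g, hEs.symm _ _ (List.isChain_pair.mp hcE)⟩
    · simp at hcm
  · intro hN E hE hEs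
    obtain ⟨F, hF, hFs, hn⟩ := hN E hE hEs
    refine ⟨F, hF, hFs, fun x₀ d hd hhead => ?_⟩
    rcases d with _ | ⟨b, t⟩
    · simp at hhead
    · simp only [List.head?, Option.some.injEq] at hhead
      subst hhead
      obtain ⟨c', hc', hm'⟩ := lift_aux hEs hFs hn t x₀ hd
      exact ⟨x₀ :: c', hc', rfl, by simp [hm']⟩
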